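/- For ν > 0 and all z in the unit disk, z · B_ν'(z) = 2ν · B_{ν-1}(z) − 2ν · B_ν(z). -/

import Mathlib

set_option maxHeartbeats 1000000

open Real Complex

/-- The Bessel-Struve kernel function. -/
noncomputable def besselStruve (ν : ℝ) (z : ℂ) : ℂ :=
  ∑' n : ℕ, ((Real.Gamma (ν + 1) * Real.Gamma (((n : ℝ) + 1) / 2) /
    (Real.sqrt Real.pi * (n.factorial : ℝ) * Real.Gamma ((n : ℝ) / 2 + ν + 1)) : ℝ) : ℂ) * z ^ n

/-- The coefficients of the Bessel-Struve kernel. -/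
noncomputable def bsC (ν : ℝ) (n : ℕ) : ℝ :=
  Real.Gamma (ν + 1) * Real.Gamma (((n : ℝ) + 1) / 2) /
    (Real.sqrt Real.pi * (n.factorial : ℝ) * Real.Gamma ((n : ℝ) / 2 + ν + 1))

lemma bsC_pos {ν : ℝ} (hν : -1 < ν) (n : ℕ) : 0 < bsC ν n := by
  have hn : (0:ℝ) ≤ (n : ℝ) := Nat.cast_nonneg n
  have h1 : 0 < Real.Gamma (ν + 1) := Real.Gamma_pos_of_pos (by linarith)
  have h2 : 0 < Real.Gamma (((n : ℝ) + 1) / 2) :=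
    Real.Gamma_pos_of_pos (by positivity)
  have h3 : 0 < Real.Gamma ((n : ℝ) / 2 + ν + 1) :=
    Real.Gamma_pos_of_pos (by linarith)
  have h4 : 0 < Real.sqrt Real.pi := Real.sqrt_pos.2 Real.pi_pos
  have h5 : 0 < (n.factorial : ℝ) := by exact_mod_cast n.factorial_pos
  exact div_pos (mul_pos h1 h2) (mul_pos (mul_pos h4 h5) h3)

lemma bsC_rec {ν : ℝ} (hν : -1 < ν) (n : ℕ) :
    bsC ν (n + 2) = bsC ν n / (((n : ℝ) + 2) * ((n : ℝ) + 2 * ν + 2)) := by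
  have hn : (0:ℝ) ≤ (n : ℝ) := Nat.cast_nonneg n
  have hπ : Real.sqrt Real.pi ≠ 0 := ne_of_gt (Real.sqrt_pos.2 Real.pi_pos)
  have hfac : ((n + 2).factorial : ℝ) = ((n : ℝ) + 2) * ((n : ℝ) + 1) * n.factorial := by
    rw [Nat.factorial_succ, Nat.factorial_succ]
    push_cast
    ring
  have hfacn : (n.factorial : ℝ) ≠ 0 := by exact_mod_cast n.factorial_ne_zero
  have e1 : (((n + 2 : ℕ) : ℝ) + 1) / 2 = ((n : ℝ) + 1) / 2 + 1 := by push_cast; ring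
  have e2 : ((n + 2 : ℕ) : ℝ) / 2 + ν + 1 = ((n : ℝ) / 2 + ν + 1) + 1 := by push_cast; ring
  have g1 : Real.Gamma ((((n + 2 : ℕ) : ℝ) + 1) / 2)
      = (((n : ℝ) + 1) / 2) * Real.Gamma (((n : ℝ) + 1) / 2) := by
    rw [e1, Real.Gamma_add_one (by positivity)]
  have hx : (0:ℝ) < (n : ℝ) / 2 + ν + 1 := by linarith
  have g2 : Real.Gamma (((n + 2 : ℕ) : ℝ) / 2 + ν + 1)
      = ((n : ℝ) / 2 + ν + 1) * Real.Gamma ((n : ℝ) / 2 + ν + 1) := by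
    rw [e2, Real.Gamma_add_one (ne_of_gt hx)]
  have hΓ3 : Real.Gamma ((n : ℝ) / 2 + ν + 1) ≠ 0 := ne_of_gt (Real.Gamma_pos_of_pos hx)
  unfold bsC
  rw [g1, g2, hfac]
  have h1 : ((n : ℝ) + 2) ≠ 0 := by positivity
  have h2 : ((n : ℝ) + 1) ≠ 0 := by positivity
  have h3 : ((n : ℝ) + 2 * ν + 2) ≠ 0 := by nlinarith
  have h4 : ((n : ℝ) / 2 + ν + 1) ≠ 0 := ne_of_gt hx
  have d1 : Real.sqrt Real.pi * (((n : ℝ) + 2) * ((n : ℝ) + 1) * (n.factorial : ℝ)) *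
      (((n : ℝ) / 2 + ν + 1) * Real.Gamma ((n : ℝ) / 2 + ν + 1)) ≠ 0 := by
    exact mul_ne_zero (mul_ne_zero hπ (mul_ne_zero (mul_ne_zero h1 h2) hfacn))
      (mul_ne_zero h4 hΓ3)
  have d2 : Real.sqrt Real.pi * (n.factorial : ℝ) * Real.Gamma ((n : ℝ) / 2 + ν + 1) *
      (((n : ℝ) + 2) * ((n : ℝ) + 2 * ν + 2)) ≠ 0 := by
    exact mul_ne_zero (mul_ne_zero (mul_ne_zero hπ hfacn) hΓ3) (mul_ne_zero h1 h3)
  rw [div_div, div_eq_div_iff d1 d2]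
  ring

lemma bsC_le {ν : ℝ} (hν : -1 < ν) (n : ℕ) :
    bsC ν n ≤ max (max (bsC ν 0) (bsC ν 1)) (bsC ν 2) := by
  induction n using Nat.strong_induction_on with
  | _ n ih =>
    match n with
    | 0 => exact le_max_of_le_left (le_max_left _ _)
    | 1 => exact le_max_of_le_left (le_max_right _ _)
    | 2 => exact le_max_right _ _
    | (m + 3) =>
      have hm : (0:ℝ) ≤ (m : ℝ) := Nat.cast_nonneg m
      have hpos : 0 < bsC ν (m + 1) := bsC_pos hν (m + 1)
      have hden : (1:ℝ) ≤ (((m + 1 : ℕ) : ℝ) + 2) * (((m + 1 : ℕ) : ℝ) + 2 * ν + 2) := by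
        push_cast
        nlinarith [mul_nonneg hm (show (0:ℝ) ≤ ν + 1 by linarith), sq_nonneg (m : ℝ)]
      have key : bsC ν (m + 3) ≤ bsC ν (m + 1) := by
        have h := bsC_rec hν (m + 1)
        rw [show m + 3 = m + 1 + 2 from rfl, h]
        exact div_le_self hpos.le hden
      exact key.trans (ih (m + 1) (by omega))

/-- key coefficient identity: `2ν c_n(ν-1) = (n + 2ν) c_n(ν)`. -/
lemma bsC_identity {ν : ℝ} (hν : 0 < ν) (n : ℕ) :
    2 * ν * bsC (ν - 1) n = ((n : ℝ) + 2 * ν) * bsC ν n := by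
  have hn : (0:ℝ) ≤ (n : ℝ) := Nat.cast_nonneg n
  have hπ : Real.sqrt Real.pi ≠ 0 := ne_of_gt (Real.sqrt_pos.2 Real.pi_pos)
  have hfacn : (n.factorial : ℝ) ≠ 0 := by exact_mod_cast n.factorial_ne_zero
  have g1 : Real.Gamma (ν + 1) = ν * Real.Gamma ν := Real.Gamma_add_one hν.ne'
  have hx : (0:ℝ) < (n : ℝ) / 2 + ν := by linarith
  have e2 : (n : ℝ) / 2 + ν + 1 = ((n : ℝ) / 2 + ν) + 1 := by ring
  have g2 : Real.Gamma ((n : ℝ) / 2 + ν + 1)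
      = ((n : ℝ) / 2 + ν) * Real.Gamma ((n : ℝ) / 2 + ν) := by
    rw [e2, Real.Gamma_add_one (ne_of_gt hx)]
  have e3 : ν - 1 + 1 = ν := by ring
  have e4 : (n : ℝ) / 2 + (ν - 1) + 1 = (n : ℝ) / 2 + ν := by ring
  have hΓν : Real.Gamma ν ≠ 0 := ne_of_gt (Real.Gamma_pos_of_pos hν)
  have hΓx : Real.Gamma ((n : ℝ) / 2 + ν) ≠ 0 := ne_of_gt (Real.Gamma_pos_of_pos hx)
  unfold bsC
  rw [e3, e4, g1, g2]
  have h4 : ((n : ℝ) / 2 + ν) ≠ 0 := ne_of_gt hx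
  field_simp

lemma bsC_bdd {ν : ℝ} (hν : -1 < ν) : ∃ M : ℝ, 0 < M ∧ ∀ n, bsC ν n ≤ M :=
  ⟨max (max (bsC ν 0) (bsC ν 1)) (bsC ν 2),
    lt_of_lt_of_le (bsC_pos hν 0) (le_max_of_le_left (le_max_left _ _)),
    bsC_le hν⟩

lemma bsC_summable {ν : ℝ} (hν : -1 < ν) {w : ℂ} (hw : ‖w‖ < 1) :
    Summable (fun n : ℕ => ((bsC ν n : ℝ) : ℂ) * w ^ n) := by
  obtain ⟨M, hM, hle⟩ := bsC_bdd hν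
  apply Summable.of_norm
  apply Summable.of_nonneg_of_le (fun n => norm_nonneg _)
    (fun n => ?_) (Summable.mul_left M (summable_geometric_of_lt_one (norm_nonneg w) hw))
  rw [norm_mul, norm_pow]
  have h1 : ‖((bsC ν n : ℝ) : ℂ)‖ = bsC ν n := by
    rw [Complex.norm_real, Real.norm_of_nonneg (le_of_lt (bsC_pos hν n))]
  rw [h1]
  have := pow_nonneg (norm_nonneg w) n
  gcongr
  exact hle n

lemma besselStruve_eq_tsum (ν : ℝ) (z : ℂ) :
    besselStruve ν z = ∑' n : ℕ, ((bsC ν n : ℝ) : ℂ) * z ^ n := rfl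

lemma besselStruve_deriv {ν : ℝ} (hν : -1 < ν) {z : ℂ} (hz : ‖z‖ < 1) :
    deriv (besselStruve ν) z
      = ∑' n : ℕ, ((bsC ν n : ℝ) : ℂ) * ((n : ℂ) * z ^ (n - 1)) := by
  obtain ⟨M, hM, hle⟩ := bsC_bdd hν
  set r : ℝ := (‖z‖ + 1) / 2 with hr
  have hr0 : 0 < r := by positivity
  have hzr : ‖z‖ < r := by rw [hr]; linarith
  have hr1 : r < 1 := by rw [hr]; linarith
  have hrne : r ≠ 0 := hr0.ne'
  have hconn : IsPreconnected (Metric.ball (0 : ℂ) r) :=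
    (convex_ball (0 : ℂ) r).isPreconnected
  have hu : Summable (fun n : ℕ => M * ((n : ℝ) * r ^ (n - 1))) := by
    apply Summable.mul_left
    have h1 : Summable (fun n : ℕ => r⁻¹ * ((n : ℝ) * r ^ n)) := by
      apply Summable.mul_left
      simpa using summable_pow_mul_geometric_of_norm_lt_one 1
        (r := r) (by rwa [Real.norm_of_nonneg hr0.le])
    apply h1.congr
    intro n
    cases n with
    | zero => simp
    | succ m =>
      simp only [Nat.succ_sub_one, pow_succ]
      field_simp
  have hg : ∀ (n : ℕ) (w : ℂ), w ∈ Metric.ball (0 : ℂ) r →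
      HasDerivAt (fun w : ℂ => ((bsC ν n : ℝ) : ℂ) * w ^ n)
        (((bsC ν n : ℝ) : ℂ) * ((n : ℂ) * w ^ (n - 1))) w := by
    intro n w _
    exact (hasDerivAt_pow n w).const_mul _
  have hg' : ∀ (n : ℕ) (w : ℂ), w ∈ Metric.ball (0 : ℂ) r →
      ‖((bsC ν n : ℝ) : ℂ) * ((n : ℂ) * w ^ (n - 1))‖ ≤ M * ((n : ℝ) * r ^ (n - 1)) := by
    intro n w hw
    have hwn : ‖w‖ ≤ r := by
      have := mem_ball_zero_iff.1 hw
      exact this.le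
    rw [norm_mul, norm_mul, norm_pow]
    have h1 : ‖((bsC ν n : ℝ) : ℂ)‖ = bsC ν n := by
      rw [Complex.norm_real, Real.norm_of_nonneg (le_of_lt (bsC_pos hν n))]
    have h2 : ‖(n : ℂ)‖ = (n : ℝ) := by simp
    rw [h1, h2]
    have := (bsC_pos hν n).le
    gcongr
    exact hle n
  have h0 : (0 : ℂ) ∈ Metric.ball (0 : ℂ) r := by simpa using hr0
  have hzmem : z ∈ Metric.ball (0 : ℂ) r := by simpa using hzr
  have hs0 : Summable (fun n : ℕ => ((bsC ν n : ℝ) : ℂ) * (0 : ℂ) ^ n) :=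
    bsC_summable hν (by simp)
  have hd := hasDerivAt_tsum_of_isPreconnected hu Metric.isOpen_ball hconn hg hg' h0 hs0 hzmem
  have hfun : besselStruve ν = fun w : ℂ => ∑' n : ℕ, ((bsC ν n : ℝ) : ℂ) * w ^ n := rfl
  rw [hfun]
  exact hd.deriv

theorem besselStruve_recurrence (ν : ℝ) (hν : 0 < ν) (z : ℂ) (hz : ‖z‖ < 1) :
    z * deriv (besselStruve ν) z =
      2 * (ν : ℂ) * besselStruve (ν - 1) z - 2 * (ν : ℂ) * besselStruve ν z := by
  have hν1 : (-1 : ℝ) < ν := by linarith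
  have hν1' : (-1 : ℝ) < ν - 1 := by linarith
  rw [besselStruve_deriv hν1 hz]
  rw [← tsum_mul_left]
  have hL : ∀ n : ℕ, z * (((bsC ν n : ℝ) : ℂ) * ((n : ℂ) * z ^ (n - 1)))
      = ((n : ℝ) : ℂ) * (((bsC ν n : ℝ) : ℂ) * z ^ n) := by
    intro n
    cases n with
    | zero => simp
    | succ m =>
      simp only [Nat.succ_sub_one]
      push_cast
      ring
  rw [tsum_congr hL]
  rw [besselStruve_eq_tsum, besselStruve_eq_tsum, ← tsum_mul_left, ← tsum_mul_left,
    ← Summable.tsum_sub ((bsC_summable hν1' hz).mul_left _) ((bsC_summable hν1 hz).mul_left _)]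
  apply tsum_congr
  intro n
  have key := bsC_identity hν n
  have keyC : (2 : ℂ) * (ν : ℂ) * ((bsC (ν - 1) n : ℝ) : ℂ)
      = (((n : ℝ) : ℂ) + 2 * (ν : ℂ)) * ((bsC ν n : ℝ) : ℂ) := by
    have h := congrArg (fun x : ℝ => (x : ℂ)) key
    push_cast at h ⊢
    linear_combination h
  calc ((n : ℝ) : ℂ) * (((bsC ν n : ℝ) : ℂ) * z ^ n)
      = ((((n : ℝ) : ℂ) + 2 * (ν : ℂ)) * ((bsC ν n : ℝ) : ℂ)
          - 2 * (ν : ℂ) * ((bsC ν n : ℝ) : ℂ)) * z ^ n := by ring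
    _ = (2 * (ν : ℂ) * ((bsC (ν - 1) n : ℝ) : ℂ)
          - 2 * (ν : ℂ) * ((bsC ν n : ℝ) : ℂ)) * z ^ n := by rw [keyC]
    _ = 2 * (ν : ℂ) * (((bsC (ν - 1) n : ℝ) : ℂ) * z ^ n)
          - 2 * (ν : ℂ) * (((bsC ν n : ℝ) : ℂ) * z ^ n) := by ring
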